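/- Let n ≥ 2, let a ≥ 1 be an integer and let 1 ≤ i < j ≤ n. Then Ã(ρ̃ + a(e_i − e_j)) ≠ 0 in the group algebra if and only if i ≤ a and j > n − a. (In the notation of the paper this says: for the negative root α = −(ε_i − ε_j) of sl_n, the alternating sum E^ρ(−aα) is nonzero exactly when i ≤ a and j > n − a.) -/

import Mathlib

open Finset

/-- The alternating sum `Ã(μ) = Σ_{σ ∈ S_n} sign(σ)·X^{σ·μ}` in the group
algebra `AddMonoidAlgebra ℤ (Fin n → ℤ)`, where `(σ·μ)_i = μ_{σ⁻¹(i)}`. -/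
noncomputable def Atilde (n : ℕ) (μ : Fin n → ℤ) : AddMonoidAlgebra ℤ (Fin n → ℤ) :=
  ∑ σ : Equiv.Perm (Fin n),
    (Equiv.Perm.sign σ : ℤ) • AddMonoidAlgebra.single (fun i => μ (σ⁻¹ i)) 1

/-- The staircase tuple `ρ̃ = (n−1, n−2, …, 1, 0)`. -/
def rhoT (n : ℕ) : Fin n → ℤ := fun i => (n : ℤ) - 1 - (i : ℤ)

lemma Atilde_apply (n : ℕ) (μ ν : Fin n → ℤ) :
    (Atilde n μ).coeff ν = ∑ σ : Equiv.Perm (Fin n), (Equiv.Perm.sign σ : ℤ) *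
      (if (fun k => μ (σ⁻¹ k)) = ν then 1 else 0) := by
  rw [Atilde, AddMonoidAlgebra.coeff_sum]
  rw [Finsupp.finset_sum_apply]
  refine Finset.sum_congr rfl fun σ _ => ?_
  rw [AddMonoidAlgebra.coeff_smul, AddMonoidAlgebra.coeff_single, Finsupp.smul_apply, Finsupp.single_apply, smul_eq_mul]

lemma Atilde_eq_zero (n : ℕ) (μ : Fin n → ℤ) (h : ¬ Function.Injective μ) :
    Atilde n μ = 0 := by
  rw [Function.not_injective_iff] at h
  obtain ⟨k, l, hkl, hne⟩ := h
  set τ := Equiv.swap k l with hτ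
  have hμτ : ∀ m, μ (τ m) = μ m := by
    intro m
    rcases eq_or_ne m k with rfl | hk
    · simp [hτ, Equiv.swap_apply_left, hkl]
    rcases eq_or_ne m l with rfl | hl
    · simp [hτ, Equiv.swap_apply_right, hkl]
    · simp [hτ, Equiv.swap_apply_of_ne_of_ne hk hl]
  set g : Equiv.Perm (Fin n) → AddMonoidAlgebra ℤ (Fin n → ℤ) :=
    fun σ => (Equiv.Perm.sign σ : ℤ) • AddMonoidAlgebra.single (fun i => μ (σ⁻¹ i)) 1 with hg
  have hgτ : ∀ σ, g (σ * τ) = - g σ := by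
    intro σ
    have h1 : (Equiv.Perm.sign (σ * τ) : ℤ) = - (Equiv.Perm.sign σ : ℤ) := by
      simp [hτ, Equiv.Perm.sign_mul, Equiv.Perm.sign_swap hne]
    have h2 : (fun i => μ ((σ * τ)⁻¹ i)) = fun i => μ (σ⁻¹ i) := by
      funext m
      simp only [mul_inv_rev, Equiv.Perm.mul_apply]
      rw [show τ⁻¹ = τ from Equiv.swap_inv k l, hμτ]
    rw [hg]
    simp only [h1, h2, neg_smul]
  have key : Atilde n μ = - Atilde n μ := by
    calc Atilde n μ = ∑ σ : Equiv.Perm (Fin n), g (σ * τ) := by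
          rw [Atilde]
          exact (Fintype.sum_equiv (Equiv.mulRight τ) _ _ (fun σ => rfl)).symm
      _ = ∑ σ : Equiv.Perm (Fin n), - g σ := by simp only [hgτ]
      _ = - Atilde n μ := by rw [Atilde, ← Finset.sum_neg_distrib]
  refine AddMonoidAlgebra.ext (Finsupp.ext fun ν => ?_)
  have h2 : (Atilde n μ).coeff ν = (-(Atilde n μ)).coeff ν := congrArg (fun x => x.coeff ν) key
  rw [AddMonoidAlgebra.coeff_neg, Finsupp.neg_apply] at h2
  have h0 : (Atilde n μ).coeff ν = 0 := by linarith
  simpa using h0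

lemma Atilde_ne_zero (n : ℕ) (μ : Fin n → ℤ) (h : Function.Injective μ) :
    Atilde n μ ≠ 0 := by
  intro h0
  have hcoef : (Atilde n μ).coeff μ = 1 := by
    rw [Atilde_apply]
    rw [Finset.sum_eq_single (1 : Equiv.Perm (Fin n))]
    · simp
    · intro σ _ hσ
      have hne : (fun k => μ (σ⁻¹ k)) ≠ μ := by
        intro hc
        apply hσ
        have hall : ∀ k, σ⁻¹ k = k := fun k => h (congrFun hc k)
        have : σ⁻¹ = 1 := Equiv.ext hall
        simpa [inv_eq_one] using this
      simp only [hne, if_false, mul_zero]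
    · simp
  rw [h0] at hcoef
  simp at hcoef

/-- formula (4.4) of the paper.
For `n ≥ 2`, `a ≥ 1` and `1 ≤ i < j ≤ n` (here realized with `0`-indexed
`i j : Fin n`, so that the `1`-indexed conditions `i ≤ a` and `j > n − a` read
`(i+1) ≤ a` and `n − a < (j+1)`), the alternating sum
`E^ρ(−aα) = Ã(ρ̃ + a(e_i − e_j))` for the negative root `α = −(ε_i − ε_j)` of
`sl_n` is nonzero exactly when `i ≤ a` and `j > n − a`. -/
theorem stmt7 (n : ℕ) (hn : 2 ≤ n) (a : ℕ) (ha : 1 ≤ a) (i j : Fin n) (hij : i < j) :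
    Atilde n (rhoT n + (a : ℤ) • (Pi.single i 1 - Pi.single j 1)) ≠ 0 ↔
      ((i : ℕ) + 1 ≤ a ∧ n - a < (j : ℕ) + 1) := by
  set μ : Fin n → ℤ := rhoT n + (a : ℤ) • (Pi.single i 1 - Pi.single j 1) with hμdef
  have hμ : ∀ k, μ k = ((n : ℤ) - 1 - (k : ℤ)) +
      (a : ℤ) * ((if k = i then 1 else 0) - (if k = j then 1 else 0)) := by
    intro k
    simp only [hμdef, Pi.add_apply, Pi.smul_apply, Pi.sub_apply, rhoT, smul_eq_mul,
      Pi.single_apply]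
  have hij' : (i : ℕ) < (j : ℕ) := hij
  have hIi := i.isLt; have hIj := j.isLt
  constructor
  · intro hne
    by_contra hc
    apply hne
    apply Atilde_eq_zero
    rw [Function.not_injective_iff]
    rw [not_and_or] at hc
    rcases hc with hc | hc
    · -- a ≤ i : collision between i - a and i
      have hai : a ≤ (i : ℕ) := by omega
      refine ⟨⟨(i : ℕ) - a, by omega⟩, i, ?_, ?_⟩
      · rw [hμ, hμ]
        have h1 : (⟨(i : ℕ) - a, by omega⟩ : Fin n) ≠ i := by
          simp only [ne_eq, Fin.ext_iff]; omega
        have h2 : (⟨(i : ℕ) - a, by omega⟩ : Fin n) ≠ j := by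
          simp only [ne_eq, Fin.ext_iff]; omega
        have h3 : i ≠ j := Fin.ne_of_lt hij
        simp only [if_neg h1, if_neg h2, if_pos rfl, if_neg h3]
        push_cast [Nat.cast_sub hai]
        ring
      · simp only [ne_eq, Fin.ext_iff]; omega
    · -- j + a ≤ n - 1 : collision between j + a and j
      have hja : (j : ℕ) + a < n := by omega
      refine ⟨⟨(j : ℕ) + a, hja⟩, j, ?_, ?_⟩
      · rw [hμ, hμ]
        have h1 : (⟨(j : ℕ) + a, hja⟩ : Fin n) ≠ i := by
          simp only [ne_eq, Fin.ext_iff]; omega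
        have h2 : (⟨(j : ℕ) + a, hja⟩ : Fin n) ≠ j := by
          simp only [ne_eq, Fin.ext_iff]; omega
        have h3 : j ≠ i := (Fin.ne_of_lt hij).symm
        simp only [if_neg h1, if_neg h2, if_pos rfl, if_neg h3]
        push_cast
        ring
      · simp only [ne_eq, Fin.ext_iff]; omega
  · rintro ⟨h1, h2⟩
    apply Atilde_ne_zero
    intro k l hkl
    have hIk := k.isLt; have hIl := l.isLt
    rw [hμ k, hμ l] at hkl
    refine Fin.ext ?_
    split_ifs at hkl <;> simp only [Fin.ext_iff] at * <;> omega
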